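/- arXiv:2007.11026 — 4 statements merged into one kernel-verified Lean document; each statement's English description precedes it below -/
import Mathlib

section
/- Let T ≥ 1 and N ≥ 1, and let Σ and Σ̂ be symmetric T × T real matrices. With r_τ and R as defined via r_τ[M] = (1/N)·(1/(T−τ))·∑_{t=1}^{T−τ} M_{t,t+τ}, the ℓ1 error satisfies ∥R[Σ̂] − R[Σ]∥_1 := ∑_{τ=0}^{T−1} |r_τ[Σ̂] − r_τ[Σ]| ≤ (√(1 + log T)/N)·∥Σ − Σ̂∥_F, where log denotes the natural logarithm and ∥·∥_F is the Frobenius norm. -/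
open Finset Matrix

lemma harm_le (T : ℕ) : ∑ j ∈ Finset.range T, ((j + 1 : ℕ) : ℝ)⁻¹ ≤ 1 + Real.log T := by
  induction T with
  | zero => simp
  | succ n ih =>
    rcases Nat.eq_zero_or_pos n with rfl | hn
    · simp
    rw [Finset.sum_range_succ]
    have hstep : ((n + 1 : ℕ) : ℝ)⁻¹ ≤ Real.log (n + 1) - Real.log n := by
      have hn' : (0 : ℝ) < n := by exact_mod_cast hn
      have h1 : (0 : ℝ) < (n : ℝ) / (n + 1) := by positivity
      have h2 := Real.log_le_sub_one_of_pos h1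
      rw [Real.log_div (ne_of_gt hn') (by positivity)] at h2
      have heq : (n : ℝ) / (n + 1) - 1 = -((n : ℝ) + 1)⁻¹ := by field_simp; ring
      push_cast
      linarith [heq ▸ h2]
    push_cast
    push_cast at ih hstep
    linarith

lemma harm_le' (T : ℕ) : ∑ τ ∈ Finset.range T, ((T - τ : ℕ) : ℝ)⁻¹ ≤ 1 + Real.log T := by
  have h := Finset.sum_range_reflect (fun j => ((j + 1 : ℕ) : ℝ)⁻¹) T
  have heq : ∑ τ ∈ Finset.range T, ((T - τ : ℕ) : ℝ)⁻¹
      = ∑ j ∈ Finset.range T, ((j + 1 : ℕ) : ℝ)⁻¹ := by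
    rw [← h]
    refine Finset.sum_congr rfl fun τ hτ => ?_
    rw [Finset.mem_range] at hτ
    congr 2
    omega
  rw [heq]; exact harm_le T

/-- Frobenius norm of a real matrix. -/
noncomputable def frob {α β : Type*} [Fintype α] [Fintype β] (M : Matrix α β ℝ) : ℝ :=
  Real.sqrt (∑ i, ∑ j, (M i j) ^ 2)

/-- Lag-`τ` autocorrelation functional
`r_τ[M] = (1/N)·(1/(T−τ))·∑_{t=1}^{T−τ} M_{t,t+τ}` (0-based indexing). -/
noncomputable def acf (N : ℕ) {T : ℕ} (M : Matrix (Fin T) (Fin T) ℝ) (τ : ℕ) : ℝ :=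
  (N : ℝ)⁻¹ * (((T - τ : ℕ) : ℝ))⁻¹ *
    ∑ t : Fin T, if h : (t : ℕ) + τ < T then M t ⟨(t : ℕ) + τ, h⟩ else 0

/-- ℓ1 bound
`∑_{τ=0}^{T−1} |r_τ[Σ̂] − r_τ[Σ]| ≤ (√(1 + log T)/N)·∥Σ − Σ̂∥_F`. -/
theorem acf_l1_bound (T N : ℕ) (hT : 1 ≤ T) (hN : 1 ≤ N)
    (S Shat : Matrix (Fin T) (Fin T) ℝ) (hS : S.IsSymm) (hShat : Shat.IsSymm) :
    ∑ τ ∈ Finset.range T, |acf N Shat τ - acf N S τ| ≤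
      Real.sqrt (1 + Real.log T) / N * frob (S - Shat) := by
  have hT0 : 0 < T := hT
  set Δ : Matrix (Fin T) (Fin T) ℝ := S - Shat with hΔ
  -- non-dependent index map
  set e : ℕ → ℕ → Fin T := fun t τ => ⟨(t + τ) % T, Nat.mod_lt _ hT0⟩ with he
  set d : ℕ → Fin T → ℝ := fun τ t =>
    if (t : ℕ) + τ < T then Δ t (e t τ) else 0 with hd
  have hd_eq : ∀ (τ : ℕ) (t : Fin T),
      (if h : (t : ℕ) + τ < T then Δ t ⟨(t : ℕ) + τ, h⟩ else 0) = d τ t := by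
    intro τ t
    by_cases h : (t : ℕ) + τ < T
    · simp only [hd, he, h, dif_pos, if_pos]
      congr 1
      exact Fin.ext (by simp [Nat.mod_eq_of_lt h])
    · simp [hd, h]
  set s : ℕ → ℝ := fun τ => ∑ t : Fin T, (d τ t) ^ 2 with hs
  have hs_nonneg : ∀ τ, 0 ≤ s τ := fun τ => Finset.sum_nonneg fun _ _ => sq_nonneg _
  have hNpos : (0 : ℝ) < N := by exact_mod_cast hN
  -- Step A
  have stepA : ∀ τ ∈ Finset.range T, |acf N Shat τ - acf N S τ| ≤
      (N : ℝ)⁻¹ * (Real.sqrt (((T - τ : ℕ) : ℝ)⁻¹) * Real.sqrt (s τ)) := by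
    intro τ hτ
    rw [Finset.mem_range] at hτ
    have hTτn : 0 < T - τ := by omega
    have hTτ : (0 : ℝ) < ((T - τ : ℕ) : ℝ) := by exact_mod_cast hTτn
    have hdiff : acf N Shat τ - acf N S τ
        = (N : ℝ)⁻¹ * (((T - τ : ℕ) : ℝ))⁻¹ * (-∑ t, d τ t) := by
      have hsub : ((∑ t : Fin T, if h : (t : ℕ) + τ < T then Shat t ⟨(t : ℕ) + τ, h⟩ else 0)
          - (∑ t : Fin T, if h : (t : ℕ) + τ < T then S t ⟨(t : ℕ) + τ, h⟩ else 0))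
          = -∑ t, d τ t := by
        rw [← Finset.sum_sub_distrib, ← Finset.sum_neg_distrib]
        refine Finset.sum_congr rfl fun t _ => ?_
        rw [← hd_eq τ t]
        by_cases h : (t : ℕ) + τ < T <;> simp [h, hΔ, Matrix.sub_apply]
      simp only [acf]
      rw [← hsub]
      ring
    set F := Finset.univ.filter (fun t : Fin T => (t : ℕ) + τ < T) with hF
    have hcard : F.card = T - τ := by
      have himg : F.image Fin.val = (Finset.range T).filter (fun t => t + τ < T) := by
        ext x
        simp only [hF, Finset.mem_image, Finset.mem_filter, Finset.mem_univ, true_and,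
          Finset.mem_range]
        constructor
        · rintro ⟨t, ht, rfl⟩; exact ⟨t.isLt, ht⟩
        · rintro ⟨hx, hxτ⟩; exact ⟨⟨x, hx⟩, hxτ, rfl⟩
      have h1 : (F.image Fin.val).card = F.card :=
        Finset.card_image_of_injective _ Fin.val_injective
      have h2 : (Finset.range T).filter (fun t => t + τ < T) = Finset.range (T - τ) := by
        ext x; simp only [Finset.mem_filter, Finset.mem_range]; omega
      rw [himg, h2, Finset.card_range] at h1
      exact h1.symm
    have hsum_eq : ∑ t, d τ t = ∑ t ∈ F, Δ t (e t τ) := by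
      rw [hF, Finset.sum_filter]
      try exact Finset.sum_congr rfl fun t _ => rfl
    have hsq_eq : ∑ t ∈ F, (Δ t (e t τ)) ^ 2 = s τ := by
      rw [hs, hF, Finset.sum_filter]
      refine Finset.sum_congr rfl fun t _ => ?_
      by_cases h : (t : ℕ) + τ < T <;> simp [hd, h]
    have hCS : (∑ t ∈ F, Δ t (e t τ)) ^ 2 ≤ (F.card : ℝ) * ∑ t ∈ F, (Δ t (e t τ)) ^ 2 :=
      sq_sum_le_card_mul_sum_sq
    rw [hcard, hsq_eq] at hCS
    have habs : |∑ t, d τ t| ≤ Real.sqrt (((T - τ : ℕ) : ℝ) * s τ) := by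
      rw [hsum_eq]
      have := Real.sqrt_le_sqrt hCS
      rwa [Real.sqrt_sq_eq_abs] at this
    rw [hdiff, abs_mul, abs_mul, abs_neg, abs_inv, abs_inv,
      Nat.abs_cast, Nat.abs_cast, mul_assoc]
    refine mul_le_mul_of_nonneg_left ?_ (by positivity)
    have hkey : ((T - τ : ℕ) : ℝ)⁻¹ * Real.sqrt (((T - τ : ℕ) : ℝ)) = Real.sqrt (((T - τ : ℕ) : ℝ)⁻¹) := by
      have hsp : 0 < Real.sqrt ((T - τ : ℕ) : ℝ) := Real.sqrt_pos.2 hTτ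
      have hms : Real.sqrt ((T - τ : ℕ) : ℝ) * Real.sqrt ((T - τ : ℕ) : ℝ)
          = ((T - τ : ℕ) : ℝ) := Real.mul_self_sqrt hTτ.le
      rw [Real.sqrt_inv]
      calc ((T - τ : ℕ) : ℝ)⁻¹ * Real.sqrt (((T - τ : ℕ) : ℝ))
          = (Real.sqrt ((T - τ : ℕ) : ℝ) * Real.sqrt ((T - τ : ℕ) : ℝ))⁻¹ *
              Real.sqrt (((T - τ : ℕ) : ℝ)) := by rw [hms]
        _ = (Real.sqrt ((T - τ : ℕ) : ℝ))⁻¹ := by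
            rw [mul_inv, mul_assoc, inv_mul_cancel₀ hsp.ne', mul_one]
    calc ((T - τ : ℕ) : ℝ)⁻¹ * |∑ t, d τ t|
        ≤ ((T - τ : ℕ) : ℝ)⁻¹ * Real.sqrt (((T - τ : ℕ) : ℝ) * s τ) :=
          mul_le_mul_of_nonneg_left habs (by positivity)
      _ = Real.sqrt (((T - τ : ℕ) : ℝ)⁻¹) * Real.sqrt (s τ) := by
          rw [Real.sqrt_mul hTτ.le, ← mul_assoc, hkey]
  -- Step B: Cauchy-Schwarz over τ
  have stepB : ∑ τ ∈ Finset.range T,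
      Real.sqrt (((T - τ : ℕ) : ℝ)⁻¹) * Real.sqrt (s τ)
      ≤ Real.sqrt (∑ τ ∈ Finset.range T, ((T - τ : ℕ) : ℝ)⁻¹) *
        Real.sqrt (∑ τ ∈ Finset.range T, s τ) :=
    Real.sum_sqrt_mul_sqrt_le _ (fun τ => by positivity) (fun τ => hs_nonneg τ)
  -- Step C: ∑ s τ ≤ frobenius squared
  have stepC : ∑ τ ∈ Finset.range T, s τ ≤ ∑ i, ∑ j, (Δ i j) ^ 2 := by
    simp only [hs]
    rw [Finset.sum_comm]
    refine Finset.sum_le_sum fun t _ => ?_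
    set G := (Finset.range T).filter (fun τ => (t : ℕ) + τ < T) with hG
    have h1 : ∑ τ ∈ Finset.range T, (d τ t) ^ 2 = ∑ τ ∈ G, (Δ t (e t τ)) ^ 2 := by
      rw [hG, Finset.sum_filter]
      refine Finset.sum_congr rfl fun τ _ => ?_
      by_cases h : (t : ℕ) + τ < T <;> simp [hd, h]
    have hinj : Set.InjOn (e (t : ℕ)) G := by
      intro a ha b hb hab
      rw [hG, Finset.coe_filter] at ha hb
      simp only [Set.mem_setOf_eq, Finset.mem_range] at ha hb
      have : ((t : ℕ) + a) % T = ((t : ℕ) + b) % T := congrArg Fin.val hab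
      rw [Nat.mod_eq_of_lt ha.2, Nat.mod_eq_of_lt hb.2] at this
      omega
    have h2 : ∑ τ ∈ G, (Δ t (e t τ)) ^ 2 = ∑ j ∈ G.image (e t), (Δ t j) ^ 2 := by
      rw [Finset.sum_image (fun a ha b hb => hinj ha hb)]
    rw [h1, h2]
    exact Finset.sum_le_sum_of_subset_of_nonneg (Finset.subset_univ _)
      (fun _ _ _ => sq_nonneg _)
  -- combine
  calc ∑ τ ∈ Finset.range T, |acf N Shat τ - acf N S τ|
      ≤ ∑ τ ∈ Finset.range T,
          (N : ℝ)⁻¹ * (Real.sqrt (((T - τ : ℕ) : ℝ)⁻¹) * Real.sqrt (s τ)) :=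
        Finset.sum_le_sum stepA
    _ = (N : ℝ)⁻¹ * ∑ τ ∈ Finset.range T,
          Real.sqrt (((T - τ : ℕ) : ℝ)⁻¹) * Real.sqrt (s τ) := by
        rw [Finset.mul_sum]
    _ ≤ (N : ℝ)⁻¹ * (Real.sqrt (∑ τ ∈ Finset.range T, ((T - τ : ℕ) : ℝ)⁻¹) *
          Real.sqrt (∑ τ ∈ Finset.range T, s τ)) :=
        mul_le_mul_of_nonneg_left stepB (by positivity)
    _ ≤ (N : ℝ)⁻¹ * (Real.sqrt (1 + Real.log T) * Real.sqrt (∑ i, ∑ j, (Δ i j) ^ 2)) := by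
        refine mul_le_mul_of_nonneg_left ?_ (by positivity)
        exact mul_le_mul (Real.sqrt_le_sqrt (harm_le' T)) (Real.sqrt_le_sqrt stepC)
          (Real.sqrt_nonneg _) (Real.sqrt_nonneg _)
    _ = Real.sqrt (1 + Real.log T) / N * frob (S - Shat) := by
        rw [frob, ← hΔ]; ring
end

section
/- Let T ≥ 1, N ≥ 1, m ≥ 1, and ε > 0. Let X be a T × N real matrix and Ω an m × N real matrix, and set Σ = X Xᵀ and Σ̂ = (X Ωᵀ)(X Ωᵀ)ᵀ = X Ωᵀ Ω Xᵀ. If ∥X Xᵀ − X Ωᵀ Ω Xᵀ∥_F ≤ ε·∥X∥_F², then, with r_τ and R defined via r_τ[M] = (1/N)·(1/(T−τ))·∑_{t=1}^{T−τ} M_{t,t+τ}, both ∥R[Σ̂] − R[Σ]∥_1 ≤ (√(1 + log T)/N)·ε·∥X∥_F² and ∥R[Σ̂] − R[Σ]∥_∞ ≤ (1/N)·ε·∥X∥_F² hold, where log is the natural logarithm. -/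
open Finset Matrix

private lemma harmonic_le_one_add_log' (T : ℕ) :
    ∑ j ∈ Finset.range T, ((j : ℝ) + 1)⁻¹ ≤ 1 + Real.log T := by
  induction T with
  | zero => simp
  | succ n ih =>
    rw [Finset.sum_range_succ]
    rcases Nat.eq_zero_or_pos n with h0 | hp
    · subst h0; simp
    · have hn : (0 : ℝ) < n := by exact_mod_cast hp
      have h1 : Real.log ((n : ℝ) / (n + 1)) ≤ (n : ℝ) / (n + 1) - 1 :=
        Real.log_le_sub_one_of_pos (by positivity)
      rw [Real.log_div (ne_of_gt hn) (by positivity)] at h1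
      have h2 : (n : ℝ) / (n + 1) - 1 = -((n : ℝ) + 1)⁻¹ := by field_simp; ring
      rw [h2] at h1
      push_cast
      linarith

/-- if `∥X Xᵀ − X Ωᵀ Ω Xᵀ∥_F ≤ ε ∥X∥_F²` then the autocorrelations computed
from the sketched data satisfy the ℓ1 bound `√(1+log T)/N · ε ∥X∥_F²` and the
ℓ∞ bound `(1/N) · ε ∥X∥_F²`. -/
theorem acf_sketch_error_bound (T N m : ℕ) (hT : 1 ≤ T) (hN : 1 ≤ N) (hm : 1 ≤ m)
    (ε : ℝ) (hε : 0 < ε)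
    (X : Matrix (Fin T) (Fin N) ℝ) (Om : Matrix (Fin m) (Fin N) ℝ)
    (h : frob (X * Xᵀ - X * Omᵀ * Om * Xᵀ) ≤ ε * frob X ^ 2) :
    (∑ τ ∈ Finset.range T, |acf N (X * Omᵀ * Om * Xᵀ) τ - acf N (X * Xᵀ) τ| ≤
        Real.sqrt (1 + Real.log T) / N * (ε * frob X ^ 2)) ∧
    ∀ τ : ℕ, τ < T →
      |acf N (X * Omᵀ * Om * Xᵀ) τ - acf N (X * Xᵀ) τ| ≤ (N : ℝ)⁻¹ * (ε * frob X ^ 2) := by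
  set F : ℝ := ε * frob X ^ 2 with hF
  have hF0 : 0 ≤ F := mul_nonneg hε.le (by positivity)
  set E : Matrix (Fin T) (Fin T) ℝ := X * Omᵀ * Om * Xᵀ - X * Xᵀ with hEdef
  -- Frobenius norm of E is controlled
  have hfrobE : frob E ≤ F := by
    have : frob E = frob (X * Xᵀ - X * Omᵀ * Om * Xᵀ) := by
      unfold frob
      congr 1
      refine Finset.sum_congr rfl fun i _ => Finset.sum_congr rfl fun j _ => ?_
      simp only [hEdef, Matrix.sub_apply]
      ring
    rw [this]; exact h
  have hfrobE0 : 0 ≤ frob E := Real.sqrt_nonneg _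
  -- per-lag diagonal sums of squares
  set s : ℕ → ℝ := fun τ =>
    ∑ t : Fin T, (if h : (t : ℕ) + τ < T then E t ⟨(t : ℕ) + τ, h⟩ else 0) ^ 2 with hs
  have hs0 : ∀ τ, 0 ≤ s τ := fun τ => Finset.sum_nonneg fun t _ => sq_nonneg _
  -- difference of acfs equals coefficient times diagonal sum of E
  have hdiff : ∀ τ : ℕ,
      acf N (X * Omᵀ * Om * Xᵀ) τ - acf N (X * Xᵀ) τ =
      (N : ℝ)⁻¹ * (((T - τ : ℕ) : ℝ))⁻¹ *
        ∑ t : Fin T, (if h : (t : ℕ) + τ < T then E t ⟨(t : ℕ) + τ, h⟩ else 0) := by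
    intro τ
    unfold acf
    rw [← mul_sub, ← Finset.sum_sub_distrib]
    congr 1
    refine Finset.sum_congr rfl fun t _ => ?_
    by_cases ht : (t : ℕ) + τ < T
    · simp [ht, hEdef, Matrix.sub_apply]
    · simp [ht]
  -- Cauchy–Schwarz per lag: the key pointwise bound
  have hd : ∀ τ : ℕ, τ < T →
      |acf N (X * Omᵀ * Om * Xᵀ) τ - acf N (X * Xᵀ) τ| ≤
        (N : ℝ)⁻¹ * Real.sqrt ((((T - τ : ℕ) : ℝ))⁻¹ * s τ) := by
    intro τ hτ
    have hc : (0 : ℝ) < ((T - τ : ℕ) : ℝ) := by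
      have : 0 < T - τ := Nat.sub_pos_of_lt hτ
      exact_mod_cast this
    set c : ℝ := ((T - τ : ℕ) : ℝ)
    set S : ℝ := ∑ t : Fin T, (if h : (t : ℕ) + τ < T then E t ⟨(t : ℕ) + τ, h⟩ else 0)
      with hSdef
    -- S^2 ≤ c * s τ
    have hCS : S ^ 2 ≤ c * s τ := by
      have key : S = ∑ t : Fin T,
          (if (t : ℕ) + τ < T then (1 : ℝ) else 0) *
          (if h : (t : ℕ) + τ < T then E t ⟨(t : ℕ) + τ, h⟩ else 0) := by
        rw [hSdef]
        refine Finset.sum_congr rfl fun t _ => ?_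
        by_cases ht : (t : ℕ) + τ < T <;> simp [ht]
      have hcard : ∑ t : Fin T, (if (t : ℕ) + τ < T then (1 : ℝ) else 0) ^ 2 = c := by
        have : ∀ t : Fin T, (if (t : ℕ) + τ < T then (1 : ℝ) else 0) ^ 2 =
            (if (t : ℕ) + τ < T then (1 : ℝ) else 0) := by
          intro t; by_cases ht : (t : ℕ) + τ < T <;> simp [ht]
        rw [Finset.sum_congr rfl fun t _ => this t]
        rw [Fin.sum_univ_eq_sum_range (fun t => if t + τ < T then (1 : ℝ) else 0)]
        rw [← Finset.sum_filter]
        have : (Finset.range T).filter (fun t => t + τ < T) = Finset.range (T - τ) := by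
          ext x; simp; omega
        rw [this]
        simp [c]
      calc S ^ 2 ≤ (∑ t : Fin T, (if (t : ℕ) + τ < T then (1 : ℝ) else 0) ^ 2) *
              ∑ t : Fin T, (if h : (t : ℕ) + τ < T then E t ⟨(t : ℕ) + τ, h⟩ else 0) ^ 2 := by
            rw [key]; exact Finset.sum_mul_sq_le_sq_mul_sq _ _ _
        _ = c * s τ := by rw [hcard]
    have hSabs : |S| ≤ Real.sqrt (c * s τ) := by
      rw [← Real.sqrt_sq_eq_abs]
      exact Real.sqrt_le_sqrt hCS
    rw [hdiff τ, ← hSdef]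
    rw [abs_mul, abs_mul, abs_inv, abs_inv, Nat.abs_cast, Nat.abs_cast]
    rw [mul_assoc]
    refine mul_le_mul_of_nonneg_left ?_ (by positivity)
    calc c⁻¹ * |S| ≤ c⁻¹ * Real.sqrt (c * s τ) :=
          mul_le_mul_of_nonneg_left hSabs (by positivity)
      _ = Real.sqrt (c⁻¹ * s τ) := by
          rw [show c⁻¹ * s τ = c⁻¹ ^ 2 * (c * s τ) by
                field_simp,
              Real.sqrt_mul (sq_nonneg _), Real.sqrt_sq (by positivity)]
    -- done with hd
  -- total sum of s is at most frob E ^ 2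
  have hsumS : ∑ τ ∈ Finset.range T, s τ ≤ frob E ^ 2 := by
    have hfrobsq : frob E ^ 2 = ∑ t : Fin T, ∑ t' : Fin T, E t t' ^ 2 := by
      unfold frob
      rw [Real.sq_sqrt]
      positivity
    rw [hfrobsq]
    have hper : ∀ t : Fin T, ∑ τ ∈ Finset.range T,
        (if h : (t : ℕ) + τ < T then E t ⟨(t : ℕ) + τ, h⟩ else 0) ^ 2 ≤
        ∑ t' : Fin T, E t t' ^ 2 := by
      intro t
      have expand : ∀ τ : ℕ, (if h : (t : ℕ) + τ < T then E t ⟨(t : ℕ) + τ, h⟩ else 0) ^ 2 =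
          ∑ t' : Fin T, (if (t' : ℕ) = (t : ℕ) + τ then E t t' ^ 2 else 0) := by
        intro τ
        by_cases ht : (t : ℕ) + τ < T
        · rw [dif_pos ht]
          rw [Finset.sum_eq_single (⟨(t : ℕ) + τ, ht⟩ : Fin T)]
          · simp
          · intro b _ hb
            rw [if_neg]
            intro hc
            exact hb (Fin.ext hc)
          · intro hmem; exact absurd (Finset.mem_univ _) hmem
        · rw [dif_neg ht]
          rw [Finset.sum_eq_zero]
          · norm_num
          · intro t' _
            rw [if_neg]
            omega
      rw [Finset.sum_congr rfl fun τ _ => expand τ, Finset.sum_comm]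
      refine Finset.sum_le_sum fun t' _ => ?_
      by_cases ht : (t : ℕ) ≤ (t' : ℕ)
      · have hiff : ∀ τ : ℕ, ((t' : ℕ) = (t : ℕ) + τ) ↔ τ = (t' : ℕ) - (t : ℕ) := by
          intro τ; omega
        calc ∑ τ ∈ Finset.range T, (if (t' : ℕ) = (t : ℕ) + τ then E t t' ^ 2 else 0)
            = ∑ τ ∈ Finset.range T, (if τ = (t' : ℕ) - (t : ℕ) then E t t' ^ 2 else 0) := by
              refine Finset.sum_congr rfl fun τ _ => ?_
              simp only [hiff τ]
          _ ≤ E t t' ^ 2 := by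
              rw [Finset.sum_ite_eq' (Finset.range T)]
              split
              · exact le_refl _
              · positivity
      · rw [Finset.sum_eq_zero]
        · positivity
        · intro τ _; rw [if_neg]; omega
    calc ∑ τ ∈ Finset.range T, s τ
        = ∑ t : Fin T, ∑ τ ∈ Finset.range T,
            (if h : (t : ℕ) + τ < T then E t ⟨(t : ℕ) + τ, h⟩ else 0) ^ 2 := by
          rw [hs]; exact Finset.sum_comm
      _ ≤ ∑ t : Fin T, ∑ t' : Fin T, E t t' ^ 2 := Finset.sum_le_sum fun t _ => hper t
  constructor
  · -- ℓ1 bound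
    have step1 : ∑ τ ∈ Finset.range T, |acf N (X * Omᵀ * Om * Xᵀ) τ - acf N (X * Xᵀ) τ| ≤
        (N : ℝ)⁻¹ * ∑ τ ∈ Finset.range T,
          Real.sqrt ((((T - τ : ℕ) : ℝ))⁻¹) * Real.sqrt (s τ) := by
      rw [Finset.mul_sum]
      refine Finset.sum_le_sum fun τ hτ => ?_
      have hτT : τ < T := Finset.mem_range.mp hτ
      calc |acf N (X * Omᵀ * Om * Xᵀ) τ - acf N (X * Xᵀ) τ|
          ≤ (N : ℝ)⁻¹ * Real.sqrt ((((T - τ : ℕ) : ℝ))⁻¹ * s τ) := hd τ hτT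
        _ = (N : ℝ)⁻¹ * (Real.sqrt ((((T - τ : ℕ) : ℝ))⁻¹) * Real.sqrt (s τ)) := by
            rw [Real.sqrt_mul (by positivity)]
    have step2 : ∑ τ ∈ Finset.range T,
        Real.sqrt ((((T - τ : ℕ) : ℝ))⁻¹) * Real.sqrt (s τ) ≤
        Real.sqrt (∑ τ ∈ Finset.range T, (((T - τ : ℕ) : ℝ))⁻¹) *
          Real.sqrt (∑ τ ∈ Finset.range T, s τ) :=
      Real.sum_sqrt_mul_sqrt_le _ (fun τ => by positivity) (fun τ => hs0 τ)
    have hharm : ∑ τ ∈ Finset.range T, (((T - τ : ℕ) : ℝ))⁻¹ ≤ 1 + Real.log T := by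
      have := Finset.sum_range_reflect (fun j => (((T - j : ℕ) : ℝ))⁻¹) T
      rw [← this]
      have heq : ∀ j ∈ Finset.range T, (((T - (T - 1 - j) : ℕ) : ℝ))⁻¹ = ((j : ℝ) + 1)⁻¹ := by
        intro j hj
        have hjT : j < T := Finset.mem_range.mp hj
        have : T - (T - 1 - j) = j + 1 := by omega
        rw [this]; push_cast; ring_nf
      rw [Finset.sum_congr rfl heq]
      exact harmonic_le_one_add_log' T
    have hsqrt1 : Real.sqrt (∑ τ ∈ Finset.range T, (((T - τ : ℕ) : ℝ))⁻¹) ≤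
        Real.sqrt (1 + Real.log T) := Real.sqrt_le_sqrt hharm
    have hsqrt2 : Real.sqrt (∑ τ ∈ Finset.range T, s τ) ≤ F := by
      calc Real.sqrt (∑ τ ∈ Finset.range T, s τ) ≤ Real.sqrt (frob E ^ 2) :=
            Real.sqrt_le_sqrt hsumS
        _ = frob E := Real.sqrt_sq hfrobE0
        _ ≤ F := hfrobE
    calc ∑ τ ∈ Finset.range T, |acf N (X * Omᵀ * Om * Xᵀ) τ - acf N (X * Xᵀ) τ|
        ≤ (N : ℝ)⁻¹ * ∑ τ ∈ Finset.range T,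
            Real.sqrt ((((T - τ : ℕ) : ℝ))⁻¹) * Real.sqrt (s τ) := step1
      _ ≤ (N : ℝ)⁻¹ * (Real.sqrt (∑ τ ∈ Finset.range T, (((T - τ : ℕ) : ℝ))⁻¹) *
            Real.sqrt (∑ τ ∈ Finset.range T, s τ)) :=
          mul_le_mul_of_nonneg_left step2 (by positivity)
      _ ≤ (N : ℝ)⁻¹ * (Real.sqrt (1 + Real.log T) * F) := by
          refine mul_le_mul_of_nonneg_left ?_ (by positivity)
          exact mul_le_mul hsqrt1 hsqrt2 (Real.sqrt_nonneg _) (Real.sqrt_nonneg _)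
      _ = Real.sqrt (1 + Real.log T) / N * F := by ring
  · -- ℓ∞ bound
    intro τ hτ
    have hc1 : (((T - τ : ℕ) : ℝ))⁻¹ ≤ 1 := by
      have : (1 : ℝ) ≤ ((T - τ : ℕ) : ℝ) := by
        have : 1 ≤ T - τ := by omega
        exact_mod_cast this
      exact inv_le_one_of_one_le₀ this
    have hsle : s τ ≤ frob E ^ 2 := by
      calc s τ ≤ ∑ τ' ∈ Finset.range T, s τ' :=
            Finset.single_le_sum (fun τ' _ => hs0 τ') (Finset.mem_range.mpr hτ)
        _ ≤ frob E ^ 2 := hsumS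
    calc |acf N (X * Omᵀ * Om * Xᵀ) τ - acf N (X * Xᵀ) τ|
        ≤ (N : ℝ)⁻¹ * Real.sqrt ((((T - τ : ℕ) : ℝ))⁻¹ * s τ) := hd τ hτ
      _ ≤ (N : ℝ)⁻¹ * F := by
          refine mul_le_mul_of_nonneg_left ?_ (by positivity)
          calc Real.sqrt ((((T - τ : ℕ) : ℝ))⁻¹ * s τ) ≤ Real.sqrt (1 * (frob E ^ 2)) := by
                refine Real.sqrt_le_sqrt ?_
                exact mul_le_mul hc1 hsle (hs0 τ) one_pos.le
            _ = frob E := by rw [one_mul, Real.sqrt_sq hfrobE0]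
            _ ≤ F := hfrobE
end

section
/- Let T ≥ 1, N ≥ 1, m ≥ 1, ε > 0, and δ ∈ (0,1). Let X be a fixed T × N real matrix and let μ be a probability measure on m × N real matrices such that μ{Ω : ∥X Xᵀ − X Ωᵀ Ω Xᵀ∥_F ≤ ε·∥X∥_F²} ≥ 1 − δ. Then, with Σ = X Xᵀ, Σ̂(Ω) = X Ωᵀ Ω Xᵀ, and R defined via r_τ[M] = (1/N)·(1/(T−τ))·∑_{t=1}^{T−τ} M_{t,t+τ}, one has μ{Ω : ∥R[Σ̂(Ω)] − R[Σ]∥_1 ≤ (√(1 + log T)/N)·ε·∥X∥_F² and ∥R[Σ̂(Ω)] − R[Σ]∥_∞ ≤ (1/N)·ε·∥X∥_F²} ≥ 1 − δ. -/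
open Finset Matrix MeasureTheory

lemma dite_sq (T : ℕ) (f : Fin T → ℝ) (n : ℕ) :
    (if h : n < T then f ⟨n, h⟩ else 0) ^ 2 = if h : n < T then f ⟨n, h⟩ ^ 2 else 0 := by
  by_cases h : n < T <;> simp [h]

lemma dite_eq_sum (T : ℕ) (f : Fin T → ℝ) (n : ℕ) :
    (if h : n < T then f ⟨n, h⟩ else 0) = ∑ t' : Fin T, if (t' : ℕ) = n then f t' else 0 := by
  by_cases h : n < T
  · rw [dif_pos h, Finset.sum_eq_single (⟨n, h⟩ : Fin T)]
    · simp
    · intro b _ hb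
      rw [if_neg]
      simpa [Fin.ext_iff] using hb
    · simp
  · rw [dif_neg h]
    refine (Finset.sum_eq_zero fun t' _ => ?_).symm
    rw [if_neg]
    intro ht'
    exact h (ht' ▸ t'.isLt)

lemma sum_ite_unique_le {s : Finset ℕ} (P : ℕ → Prop) [DecidablePred P]
    (hP : ∀ a, ∀ b, P a → P b → a = b) {a : ℝ} (ha : 0 ≤ a) :
    ∑ τ ∈ s, (if P τ then a else 0) ≤ a := by
  rw [← Finset.sum_filter, Finset.sum_const, nsmul_eq_mul]
  have hcard : ((s.filter P).card : ℝ) ≤ 1 := by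
    have : (s.filter P).card ≤ 1 := by
      refine Finset.card_le_one.mpr fun x hx y hy => ?_
      simp only [Finset.mem_filter] at hx hy
      exact hP x y hx.2 hy.2
    exact_mod_cast this
  calc ((s.filter P).card : ℝ) * a ≤ 1 * a := mul_le_mul_of_nonneg_right hcard ha
    _ = a := one_mul a

lemma acf_sub (N : ℕ) {T : ℕ} (A B : Matrix (Fin T) (Fin T) ℝ) (τ : ℕ) :
    acf N (A - B) τ = acf N A τ - acf N B τ := by
  unfold acf
  rw [← mul_sub, ← Finset.sum_sub_distrib]
  congr 1
  refine Finset.sum_congr rfl fun t _ => ?_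
  by_cases h : (t : ℕ) + τ < T <;> simp [h, Matrix.sub_apply]

lemma harmonic_sum_bound (T : ℕ) :
    ∑ τ ∈ Finset.range T, (((T - τ : ℕ) : ℝ))⁻¹ ≤ 1 + Real.log T := by
  have h1 : ∑ τ ∈ Finset.range T, (((T - τ : ℕ) : ℝ))⁻¹
      = ∑ τ ∈ Finset.range T, (((τ + 1 : ℕ) : ℝ))⁻¹ := by
    rw [← Finset.sum_range_reflect (fun j => (((j + 1 : ℕ) : ℝ))⁻¹) T]
    refine Finset.sum_congr rfl fun τ hτ => ?_
    simp only [Finset.mem_range] at hτ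
    congr 2
    omega
  have h2 : ((harmonic T : ℚ) : ℝ) = ∑ τ ∈ Finset.range T, (((τ + 1 : ℕ) : ℝ))⁻¹ := by
    rw [harmonic]
    push_cast
    rfl
  rw [h1, ← h2]
  exact harmonic_le_one_add_log T

lemma acf_key (T N : ℕ) (hT : 1 ≤ T) (hN : 1 ≤ N) (E : Matrix (Fin T) (Fin T) ℝ)
    (c : ℝ) (hc : frob E ≤ c) :
    (∑ τ ∈ Finset.range T, |acf N E τ| ≤ Real.sqrt (1 + Real.log T) / N * c) ∧
    (∀ τ : ℕ, τ < T → |acf N E τ| ≤ (N : ℝ)⁻¹ * c) := by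
  set F2 : ℝ := ∑ i, ∑ j, (E i j) ^ 2 with hF2def
  have hF2 : 0 ≤ F2 := Finset.sum_nonneg fun i _ => Finset.sum_nonneg fun j _ => sq_nonneg _
  have hfrob : frob E = Real.sqrt F2 := rfl
  have hc0 : 0 ≤ c := le_trans (Real.sqrt_nonneg F2) (hfrob ▸ hc)
  set q : ℕ → ℝ := fun τ =>
    ∑ t : Fin T, (if h : (t : ℕ) + τ < T then E t ⟨(t : ℕ) + τ, h⟩ else 0) ^ 2 with hqdef
  have hq0 : ∀ τ, 0 ≤ q τ := fun τ => Finset.sum_nonneg fun t _ => sq_nonneg _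
  have hqF : ∀ τ, q τ ≤ F2 := by
    intro τ
    refine Finset.sum_le_sum fun t _ => ?_
    by_cases h : (t : ℕ) + τ < T
    · rw [dif_pos h]
      exact Finset.single_le_sum (f := fun j => E t j ^ 2) (fun j _ => sq_nonneg _)
        (Finset.mem_univ _)
    · rw [dif_neg h]
      simpa using Finset.sum_nonneg fun j _ => sq_nonneg (E t j)
  have hqsum : ∑ τ ∈ Finset.range T, q τ ≤ F2 := by
    rw [hqdef, Finset.sum_comm]
    refine Finset.sum_le_sum fun t _ => ?_
    have heq : ∀ τ, (if h : (t : ℕ) + τ < T then E t ⟨(t : ℕ) + τ, h⟩ else 0) ^ 2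
        = ∑ t' : Fin T, if (t' : ℕ) = (t : ℕ) + τ then E t t' ^ 2 else 0 := by
      intro τ
      rw [dite_sq T (fun x => E t x) ((t : ℕ) + τ)]
      exact dite_eq_sum T (fun x => E t x ^ 2) ((t : ℕ) + τ)
    calc ∑ τ ∈ Finset.range T, (if h : (t : ℕ) + τ < T then E t ⟨(t : ℕ) + τ, h⟩ else 0) ^ 2
        = ∑ τ ∈ Finset.range T, ∑ t' : Fin T,
            (if (t' : ℕ) = (t : ℕ) + τ then E t t' ^ 2 else 0) :=
          Finset.sum_congr rfl fun τ _ => heq τ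
      _ = ∑ t' : Fin T, ∑ τ ∈ Finset.range T,
            (if (t' : ℕ) = (t : ℕ) + τ then E t t' ^ 2 else 0) := Finset.sum_comm
      _ ≤ ∑ t' : Fin T, E t t' ^ 2 := by
          refine Finset.sum_le_sum fun t' _ => ?_
          exact sum_ite_unique_le _ (fun a b ha hb => by omega) (sq_nonneg _)
  have hmain : ∀ τ, τ < T →
      |acf N E τ| ≤ (N : ℝ)⁻¹ * Real.sqrt (((T - τ : ℕ) : ℝ))⁻¹ * Real.sqrt (q τ) := by
    intro τ hτ
    have hn : 1 ≤ T - τ := by omega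
    have hn0 : (0 : ℝ) < ((T - τ : ℕ) : ℝ) := by exact_mod_cast hn
    set d : Fin T → ℝ := fun t => if h : (t : ℕ) + τ < T then E t ⟨(t : ℕ) + τ, h⟩ else 0
      with hddef
    have hfil : ∑ t : Fin T, d t
        = ∑ t ∈ Finset.univ.filter (fun t : Fin T => (t : ℕ) + τ < T), d t := by
      refine (Finset.sum_filter_of_ne fun t _ hne => ?_).symm
      by_contra hcon
      exact hne (dif_neg hcon)
    have hcard : ((Finset.univ.filter (fun t : Fin T => (t : ℕ) + τ < T)).card : ℝ)
        ≤ ((T - τ : ℕ) : ℝ) := by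
      have hfin : (Finset.univ.filter (fun t : Fin T => (t : ℕ) + τ < T)).card ≤ T - τ := by
        calc (Finset.univ.filter (fun t : Fin T => (t : ℕ) + τ < T)).card
            ≤ (Finset.range (T - τ)).card := by
              refine Finset.card_le_card_of_injOn (fun t : Fin T => (t : ℕ)) ?_
                (fun a _ b _ hab => Fin.ext hab)
              intro a ha
              have h2 : (a : ℕ) + τ < T := by simpa using ha
              simp only [Finset.mem_coe, Finset.mem_range]
              omega
          _ = T - τ := Finset.card_range _
      exact_mod_cast hfin
    have hS2 : (∑ t : Fin T, d t) ^ 2 ≤ ((T - τ : ℕ) : ℝ) * q τ := by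
      calc (∑ t : Fin T, d t) ^ 2
          = (∑ t ∈ Finset.univ.filter (fun t : Fin T => (t : ℕ) + τ < T), d t) ^ 2 := by
            rw [← hfil]
        _ ≤ ((Finset.univ.filter (fun t : Fin T => (t : ℕ) + τ < T)).card : ℝ) *
              ∑ t ∈ Finset.univ.filter (fun t : Fin T => (t : ℕ) + τ < T), d t ^ 2 :=
            sq_sum_le_card_mul_sum_sq
        _ ≤ ((T - τ : ℕ) : ℝ) * q τ := by
            refine mul_le_mul hcard ?_ (Finset.sum_nonneg fun t _ => sq_nonneg _) hn0.le
            exact Finset.sum_le_sum_of_subset_of_nonneg (Finset.filter_subset _ _)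
              (fun t _ _ => sq_nonneg _)
    have hSabs : |∑ t : Fin T, d t| ≤
        Real.sqrt ((T - τ : ℕ) : ℝ) * Real.sqrt (q τ) := by
      rw [← Real.sqrt_sq_eq_abs, ← Real.sqrt_mul hn0.le]
      exact Real.sqrt_le_sqrt hS2
    have hs : (0 : ℝ) < Real.sqrt ((T - τ : ℕ) : ℝ) := Real.sqrt_pos.mpr hn0
    have hsqrt : (((T - τ : ℕ) : ℝ))⁻¹ * Real.sqrt ((T - τ : ℕ) : ℝ)
        = Real.sqrt (((T - τ : ℕ) : ℝ))⁻¹ := by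
      rw [Real.sqrt_inv]
      have hmul : ((T - τ : ℕ) : ℝ) = Real.sqrt ((T - τ : ℕ) : ℝ) *
          Real.sqrt ((T - τ : ℕ) : ℝ) := (Real.mul_self_sqrt hn0.le).symm
      nth_rewrite 1 [hmul]
      rw [mul_inv, mul_assoc, inv_mul_cancel₀ hs.ne', mul_one]
    have hacf : acf N E τ = (N : ℝ)⁻¹ * (((T - τ : ℕ) : ℝ))⁻¹ * ∑ t : Fin T, d t := rfl
    rw [hacf, abs_mul, abs_mul,
      abs_of_nonneg (inv_nonneg.mpr (Nat.cast_nonneg N)),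
      abs_of_nonneg (inv_nonneg.mpr hn0.le)]
    calc (N : ℝ)⁻¹ * (((T - τ : ℕ) : ℝ))⁻¹ * |∑ t : Fin T, d t|
        ≤ (N : ℝ)⁻¹ * (((T - τ : ℕ) : ℝ))⁻¹ *
            (Real.sqrt ((T - τ : ℕ) : ℝ) * Real.sqrt (q τ)) :=
          mul_le_mul_of_nonneg_left hSabs (by positivity)
      _ = (N : ℝ)⁻¹ * Real.sqrt (((T - τ : ℕ) : ℝ))⁻¹ * Real.sqrt (q τ) := by
          rw [← hsqrt]; ring
  constructor
  · calc ∑ τ ∈ Finset.range T, |acf N E τ|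
        ≤ ∑ τ ∈ Finset.range T,
            (N : ℝ)⁻¹ * (Real.sqrt (((T - τ : ℕ) : ℝ))⁻¹ * Real.sqrt (q τ)) := by
          refine Finset.sum_le_sum fun τ hτ => ?_
          rw [← mul_assoc]
          exact hmain τ (Finset.mem_range.mp hτ)
      _ = (N : ℝ)⁻¹ * ∑ τ ∈ Finset.range T,
            Real.sqrt (((T - τ : ℕ) : ℝ))⁻¹ * Real.sqrt (q τ) := by
          rw [Finset.mul_sum]
      _ ≤ (N : ℝ)⁻¹ * (Real.sqrt (∑ τ ∈ Finset.range T, (((T - τ : ℕ) : ℝ))⁻¹) *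
            Real.sqrt (∑ τ ∈ Finset.range T, q τ)) := by
          refine mul_le_mul_of_nonneg_left ?_ (inv_nonneg.mpr (Nat.cast_nonneg N))
          exact Real.sum_sqrt_mul_sqrt_le _
            (fun τ => inv_nonneg.mpr (Nat.cast_nonneg _)) hq0
      _ ≤ (N : ℝ)⁻¹ * (Real.sqrt (1 + Real.log T) * c) := by
          refine mul_le_mul_of_nonneg_left ?_ (inv_nonneg.mpr (Nat.cast_nonneg N))
          refine mul_le_mul (Real.sqrt_le_sqrt (harmonic_sum_bound T))
            (le_trans (Real.sqrt_le_sqrt hqsum) (hfrob ▸ hc))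
            (Real.sqrt_nonneg _) (Real.sqrt_nonneg _)
      _ = Real.sqrt (1 + Real.log T) / N * c := by
          rw [div_eq_inv_mul]; ring
  · intro τ hτ
    refine (hmain τ hτ).trans ?_
    have hn : 1 ≤ T - τ := by omega
    have hn1 : (1 : ℝ) ≤ ((T - τ : ℕ) : ℝ) := by exact_mod_cast hn
    have h1 : Real.sqrt (((T - τ : ℕ) : ℝ))⁻¹ ≤ 1 :=
      Real.sqrt_le_one.mpr (inv_le_one_of_one_le₀ hn1)
    have h2 : Real.sqrt (q τ) ≤ c :=
      le_trans (Real.sqrt_le_sqrt (hqF τ)) (hfrob ▸ hc)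
    calc (N : ℝ)⁻¹ * Real.sqrt (((T - τ : ℕ) : ℝ))⁻¹ * Real.sqrt (q τ)
        ≤ (N : ℝ)⁻¹ * 1 * c := by
          refine mul_le_mul ?_ h2 (Real.sqrt_nonneg _) (by positivity)
          exact mul_le_mul_of_nonneg_left h1 (inv_nonneg.mpr (Nat.cast_nonneg N))
      _ = (N : ℝ)⁻¹ * c := by ring

/-- if with probability at least `1−δ` (over the random sketch `Ω ∼ μ`) one has
`∥X Xᵀ − X Ωᵀ Ω Xᵀ∥_F ≤ ε ∥X∥_F²`, then with probability at least `1−δ` the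
autocorrelation errors satisfy the ℓ1 bound `√(1+log T)/N · ε ∥X∥_F²` and the
ℓ∞ bound `(1/N) · ε ∥X∥_F²`. -/
theorem acf_sketch_error_bound_prob (T N m : ℕ) (hT : 1 ≤ T) (hN : 1 ≤ N) (hm : 1 ≤ m)
    (ε δ : ℝ) (hε : 0 < ε) (hδ0 : 0 < δ) (hδ1 : δ < 1)
    (X : Matrix (Fin T) (Fin N) ℝ)
    [MeasurableSpace (Matrix (Fin m) (Fin N) ℝ)]
    (μ : Measure (Matrix (Fin m) (Fin N) ℝ)) [IsProbabilityMeasure μ]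
    (h : ENNReal.ofReal (1 - δ) ≤
      μ {Om | frob (X * Xᵀ - X * Omᵀ * Om * Xᵀ) ≤ ε * frob X ^ 2}) :
    ENNReal.ofReal (1 - δ) ≤
      μ {Om |
        (∑ τ ∈ Finset.range T, |acf N (X * Omᵀ * Om * Xᵀ) τ - acf N (X * Xᵀ) τ| ≤
          Real.sqrt (1 + Real.log T) / N * (ε * frob X ^ 2)) ∧
        ∀ τ : ℕ, τ < T →
          |acf N (X * Omᵀ * Om * Xᵀ) τ - acf N (X * Xᵀ) τ| ≤ (N : ℝ)⁻¹ * (ε * frob X ^ 2)} := by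
  refine le_trans h (measure_mono fun Om hOm => ?_)
  simp only [Set.mem_setOf_eq] at hOm ⊢
  obtain ⟨h1, h2⟩ := acf_key T N hT hN (X * Xᵀ - X * Omᵀ * Om * Xᵀ) (ε * frob X ^ 2) hOm
  have habs : ∀ τ : ℕ, |acf N (X * Omᵀ * Om * Xᵀ) τ - acf N (X * Xᵀ) τ|
      = |acf N (X * Xᵀ - X * Omᵀ * Om * Xᵀ) τ| := fun τ => by
    rw [acf_sub, abs_sub_comm]
  constructor
  · have heq := Finset.sum_congr rfl fun τ (_ : τ ∈ Finset.range T) => habs τ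
    rw [heq]
    exact h1
  · intro τ hτ
    rw [habs τ]
    exact h2 τ hτ
end

section
/- Let T ≥ 1 and let Δ be a T × T real matrix. Then ∑_{τ=0}^{T−1} (1/(T−τ)) ∑_{t=1}^{T−τ} |Δ_{t,t+τ}| ≤ √(1 + log T) · ∥Δ∥_F, where the inner sums range over the diagonals of Δ on and above the main diagonal, log is the natural logarithm, and ∥·∥_F is the Frobenius norm. -/
open Finset Matrix

/-- summing the averaged absolute values of the upper diagonals of `Δ`,
`∑_{τ=0}^{T−1} (1/(T−τ)) ∑_{t=1}^{T−τ} |Δ_{t,t+τ}| ≤ √(1 + log T) · ∥Δ∥_F`. -/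
theorem upper_diagonal_avg_abs_sum_le (T : ℕ) (hT : 1 ≤ T)
    (Δ : Matrix (Fin T) (Fin T) ℝ) :
    ∑ τ ∈ Finset.range T,
        (((T - τ : ℕ) : ℝ))⁻¹ *
          ∑ t : Fin T, (if h : (t : ℕ) + τ < T then |Δ t ⟨(t : ℕ) + τ, h⟩| else 0)
      ≤ Real.sqrt (1 + Real.log T) * frob Δ := by
  classical
  set S : ℝ := ∑ i, ∑ j, (Δ i j) ^ 2 with hS
  have hSnn : 0 ≤ S := by
    apply Finset.sum_nonneg; intro i _; apply Finset.sum_nonneg; intro j _; positivity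
  set a : ℕ → ℝ := fun τ =>
    ∑ t : Fin T, (if h : (t : ℕ) + τ < T then |Δ t ⟨(t : ℕ) + τ, h⟩| else 0) with ha
  set q : ℕ → ℝ := fun τ =>
    ∑ t : Fin T, (if h : (t : ℕ) + τ < T then (Δ t ⟨(t : ℕ) + τ, h⟩) ^ 2 else 0) with hq
  have hann : ∀ τ, 0 ≤ a τ := by
    intro τ; apply Finset.sum_nonneg; intro t _; split <;> positivity
  have hqnn : ∀ τ, 0 ≤ q τ := by
    intro τ; apply Finset.sum_nonneg; intro t _; split <;> positivity
  -- per-diagonal Cauchy–Schwarz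
  have key : ∀ τ ∈ Finset.range T, (((T - τ : ℕ) : ℝ))⁻¹ * (a τ) ^ 2 ≤ q τ := by
    intro τ hτ
    have hτT : τ < T := Finset.mem_range.mp hτ
    have hpos : (0 : ℝ) < ((T - τ : ℕ) : ℝ) := by
      have : 0 < T - τ := Nat.sub_pos_of_lt hτT
      exact_mod_cast this
    have hcs := sum_mul_sq_le_sq_mul_sq Finset.univ
      (fun t : Fin T => if (t : ℕ) + τ < T then (1 : ℝ) else 0)
      (fun t : Fin T => if h : (t : ℕ) + τ < T then |Δ t ⟨(t : ℕ) + τ, h⟩| else 0)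
    have e1 : ∑ t : Fin T,
        ((if (t : ℕ) + τ < T then (1 : ℝ) else 0) *
          (if h : (t : ℕ) + τ < T then |Δ t ⟨(t : ℕ) + τ, h⟩| else 0)) = a τ := by
      rw [ha]; apply Finset.sum_congr rfl; intro t _; split_ifs with h <;> simp
    have e2 : ∑ t : Fin T, (if (t : ℕ) + τ < T then (1 : ℝ) else 0) ^ 2
        = ((T - τ : ℕ) : ℝ) := by
      have : ∀ t : Fin T, (if (t : ℕ) + τ < T then (1 : ℝ) else 0) ^ 2
          = (if (t : ℕ) + τ < T then (1 : ℝ) else 0) := by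
        intro t; split_ifs <;> simp
      rw [Finset.sum_congr rfl fun t _ => this t]
      rw [Fin.sum_univ_eq_sum_range (fun i => if i + τ < T then (1 : ℝ) else 0) T]
      have : ∀ i ∈ Finset.range T, (if i + τ < T then (1 : ℝ) else 0)
          = (if i ∈ Finset.range (T - τ) then (1 : ℝ) else 0) := by
        intro i hi; simp only [Finset.mem_range]; congr 1; simp only [eq_iff_iff]; omega
      rw [Finset.sum_congr rfl this, Finset.sum_ite_mem, Finset.inter_eq_right.mpr
        (by intro x hx; simp only [Finset.mem_range] at *; omega)]
      simp
    have e3 : ∑ t : Fin T,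
        (if h : (t : ℕ) + τ < T then |Δ t ⟨(t : ℕ) + τ, h⟩| else 0) ^ 2 = q τ := by
      rw [hq]; apply Finset.sum_congr rfl; intro t _; split_ifs with h <;> simp [sq_abs]
    rw [e1, e2, e3] at hcs
    rw [inv_mul_le_iff₀ hpos]
    exact hcs
  -- sum of diagonal square-sums is at most S
  have hqS : ∑ τ ∈ Finset.range T, q τ ≤ S := by
    rw [hq, hS, Finset.sum_comm]
    refine Finset.sum_le_sum fun t _ => ?_
    set G : ℕ → ℝ := fun j => if h : j < T then (Δ t ⟨j, h⟩) ^ 2 else 0 with hG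
    have hGnn : ∀ j, 0 ≤ G j := by intro j; simp only [hG]; split <;> positivity
    have e1 : ∑ τ ∈ Finset.range T,
        (if h : (t : ℕ) + τ < T then (Δ t ⟨(t : ℕ) + τ, h⟩) ^ 2 else 0)
        = ∑ τ ∈ Finset.range T, G ((t : ℕ) + τ) := rfl
    rw [e1]
    have e2 : ∑ τ ∈ Finset.range T, G ((t : ℕ) + τ)
        = ∑ τ ∈ Finset.range (T - (t : ℕ)), G ((t : ℕ) + τ) := by
      refine (Finset.sum_subset ?_ ?_).symm
      · intro x hx; simp only [Finset.mem_range] at *; omega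
      · intro x hx hx'; simp only [Finset.mem_range] at hx hx'
        simp only [hG]; rw [dif_neg]; omega
    have e3 : ∑ τ ∈ Finset.range (T - (t : ℕ)), G ((t : ℕ) + τ)
        = ∑ j ∈ Finset.Ico (t : ℕ) T, G j := (Finset.sum_Ico_eq_sum_range G (t : ℕ) T).symm
    rw [e2, e3]
    have e4 : ∑ j ∈ Finset.Ico (t : ℕ) T, G j ≤ ∑ j ∈ Finset.range T, G j := by
      apply Finset.sum_le_sum_of_subset_of_nonneg
      · intro x hx; simp only [Finset.mem_Ico, Finset.mem_range] at *; omega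
      · intro i _ _; exact hGnn i
    refine e4.trans ?_
    rw [← Fin.sum_univ_eq_sum_range (fun j => G j) T]
    apply le_of_eq
    apply Finset.sum_congr rfl; intro j _
    simp only [hG]; rw [dif_pos j.isLt]
  -- harmonic bound
  have hH : ∑ τ ∈ Finset.range T, (((T - τ : ℕ) : ℝ))⁻¹ ≤ 1 + Real.log T := by
    have e1 : ∑ τ ∈ Finset.range T, (((T - τ : ℕ) : ℝ))⁻¹
        = ∑ i ∈ Finset.range T, (((i + 1 : ℕ) : ℝ))⁻¹ := by
      rw [← Finset.sum_range_reflect (fun i => (((i + 1 : ℕ) : ℝ))⁻¹) T]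
      apply Finset.sum_congr rfl; intro τ hτ
      have hτT : τ < T := Finset.mem_range.mp hτ
      have : T - 1 - τ + 1 = T - τ := by omega
      simp only [this]
    rw [e1]
    have h2 := harmonic_le_one_add_log T
    have e2 : ((harmonic T : ℚ) : ℝ) = ∑ i ∈ Finset.range T, (((i + 1 : ℕ) : ℝ))⁻¹ := by
      rw [harmonic]; push_cast; rfl
    rw [← e2]; exact h2
  have hHnn : 0 ≤ ∑ τ ∈ Finset.range T, (((T - τ : ℕ) : ℝ))⁻¹ := by
    apply Finset.sum_nonneg; intro τ _; positivity
  -- main Cauchy–Schwarz across diagonals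
  have main : ∑ τ ∈ Finset.range T, (((T - τ : ℕ) : ℝ))⁻¹ * a τ
      ≤ Real.sqrt (∑ τ ∈ Finset.range T, (((T - τ : ℕ) : ℝ))⁻¹) *
        Real.sqrt (∑ τ ∈ Finset.range T, (((T - τ : ℕ) : ℝ))⁻¹ * (a τ) ^ 2) := by
    have e1 : ∀ τ ∈ Finset.range T, (((T - τ : ℕ) : ℝ))⁻¹ * a τ
        = Real.sqrt ((((T - τ : ℕ) : ℝ))⁻¹) * (Real.sqrt ((((T - τ : ℕ) : ℝ))⁻¹) * a τ) := by
      intro τ _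
      rw [← mul_assoc, Real.mul_self_sqrt (by positivity)]
    rw [Finset.sum_congr rfl e1]
    refine (Real.sum_mul_le_sqrt_mul_sqrt _ _ _).trans ?_
    apply le_of_eq
    congr 1
    · congr 1; apply Finset.sum_congr rfl; intro τ _
      rw [Real.sq_sqrt (by positivity)]
    · congr 1; apply Finset.sum_congr rfl; intro τ _
      rw [mul_pow, Real.sq_sqrt (by positivity)]
  calc ∑ τ ∈ Finset.range T,
        (((T - τ : ℕ) : ℝ))⁻¹ *
          ∑ t : Fin T, (if h : (t : ℕ) + τ < T then |Δ t ⟨(t : ℕ) + τ, h⟩| else 0)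
      = ∑ τ ∈ Finset.range T, (((T - τ : ℕ) : ℝ))⁻¹ * a τ := rfl
    _ ≤ Real.sqrt (∑ τ ∈ Finset.range T, (((T - τ : ℕ) : ℝ))⁻¹) *
        Real.sqrt (∑ τ ∈ Finset.range T, (((T - τ : ℕ) : ℝ))⁻¹ * (a τ) ^ 2) := main
    _ ≤ Real.sqrt (1 + Real.log T) * frob Δ := by
        apply mul_le_mul
        · exact Real.sqrt_le_sqrt hH
        · rw [frob, ← hS]
          apply Real.sqrt_le_sqrt
          exact (Finset.sum_le_sum key).trans hqS
        · exact Real.sqrt_nonneg _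
        · exact Real.sqrt_nonneg _
end
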